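/- A matching M of a graph G is uniquely restricted (i.e., M is the unique perfect matching of the subgraph induced by the vertices covered by M) if and only if G contains no M-alternating cycle, that is, no cycle whose edges alternate between edges in M and edges not in M. -/

import Mathlib

namespace SSE

open SimpleGraph

variable {V : Type*} {W : Type*}

/-- The set of vertices covered by a set of edges. -/
def cov (M : Set (Sym2 V)) : Set V := {v | ∃ e ∈ M, v ∈ e}

/-- `M` is a matching of `G`: a set of pairwise disjoint edges of `G`. -/
def IsMatchingSet (G : SimpleGraph V) (M : Set (Sym2 V)) : Prop :=
  M ⊆ G.edgeSet ∧ ∀ e ∈ M, ∀ f ∈ M, e ≠ f → ∀ v : V, v ∈ e → v ∉ f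

/-- `v` is a pendant vertex (degree 1) of the subgraph `G_M` of `G` induced by
the vertices covered by `M`. -/
def PendantIn (G : SimpleGraph V) (M : Set (Sym2 V)) (v : V) : Prop :=
  v ∈ cov M ∧ ∃! u, u ∈ cov M ∧ G.Adj v u

/-- `M` is an induced (strong) matching of `G`: every vertex of `G_M` is pendant in `G_M`. -/
def IsInducedMatching (G : SimpleGraph V) (M : Set (Sym2 V)) : Prop :=
  IsMatchingSet G M ∧ ∀ v ∈ cov M, PendantIn G M v

/-- `M` is a semistrong matching of `G`: every edge of `M` is a pendant edge of `G_M`. -/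
def IsSemistrongMatching (G : SimpleGraph V) (M : Set (Sym2 V)) : Prop :=
  IsMatchingSet G M ∧ ∀ e ∈ M, ∃ v, v ∈ e ∧ PendantIn G M v

/-- `N` is a perfect matching of the subgraph of `G` induced by `S`. -/
def IsPerfectMatchingOn (G : SimpleGraph V) (S : Set V) (N : Set (Sym2 V)) : Prop :=
  IsMatchingSet G N ∧ (∀ e ∈ N, ∀ v : V, v ∈ e → v ∈ S) ∧ cov N = S

/-- `M` is a uniquely restricted matching of `G`: it is the unique perfect matching
of the subgraph induced by the vertices it covers. -/
def IsUniquelyRestrictedMatching (G : SimpleGraph V) (M : Set (Sym2 V)) : Prop :=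
  IsMatchingSet G M ∧ ∀ N : Set (Sym2 V), IsPerfectMatchingOn G (cov M) N → N = M

/-- An edge coloring of `G` with colors `< k` each of whose color classes satisfies `P`. -/
def IsPColoring (G : SimpleGraph V) (P : SimpleGraph V → Set (Sym2 V) → Prop)
    (c : Sym2 V → ℕ) (k : ℕ) : Prop :=
  (∀ e ∈ G.edgeSet, c e < k) ∧ ∀ i : ℕ, P G {e | e ∈ G.edgeSet ∧ c e = i}

/-- The least number of colors in an edge coloring of `G` whose color classes satisfy `P`. -/
noncomputable def pIndex (G : SimpleGraph V)
    (P : SimpleGraph V → Set (Sym2 V) → Prop) : ℕ :=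
  sInf {k | ∃ c, IsPColoring G P c k}

/-- The chromatic index. -/
noncomputable def chromIndex (G : SimpleGraph V) : ℕ := pIndex G IsMatchingSet

/-- The uniquely restricted chromatic index. -/
noncomputable def urIndex (G : SimpleGraph V) : ℕ := pIndex G IsUniquelyRestrictedMatching

/-- The semistrong chromatic index. -/
noncomputable def ssIndex (G : SimpleGraph V) : ℕ := pIndex G IsSemistrongMatching

/-- The strong chromatic index. -/
noncomputable def strongIndex (G : SimpleGraph V) : ℕ := pIndex G IsInducedMatching

/-- The degree of a vertex. -/
noncomputable def natDeg (G : SimpleGraph V) (v : V) : ℕ := (G.neighborSet v).ncard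

/-- The maximum average degree of `G` is (strictly) less than `q`:
every nonempty (induced) subgraph has average degree `< q`. -/
def MadLT (G : SimpleGraph V) (q : ℚ) : Prop :=
  ∀ s : Set V, s.Finite → s.Nonempty →
    (2 * ({e ∈ G.edgeSet | ∀ v ∈ e, v ∈ s}.ncard : ℚ)) < q * s.ncard

/-- `K` is a minor of `G` (branch-set formulation). -/
def HasMinor (G : SimpleGraph V) (K : SimpleGraph W) : Prop :=
  ∃ B : W → Set V, (∀ w, (B w).Nonempty) ∧
    (∀ w, (G.induce (B w)).Connected) ∧
    (Pairwise fun w w' => Disjoint (B w) (B w')) ∧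
    (∀ w w', K.Adj w w' → ∃ u ∈ B w, ∃ v ∈ B w', G.Adj u v)

/-- `G` is planar (by Wagner's theorem: no `K₅` minor and no `K₃,₃` minor). -/
def IsPlanar (G : SimpleGraph V) : Prop :=
  ¬ HasMinor G (completeGraph (Fin 5)) ∧
  ¬ HasMinor G (completeBipartiteGraph (Fin 3) (Fin 3))

/-- The join `C_Δ ∨ I_2` of a cycle on `Δ` vertices with an independent set of 2 vertices. -/
def joinCI (n : ℕ) : SimpleGraph (Fin n ⊕ Fin 2) :=
  SimpleGraph.fromRel (fun x y =>
    match x, y with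
    | Sum.inl a, Sum.inl b => (SimpleGraph.cycleGraph n).Adj a b
    | Sum.inl _, Sum.inr _ => True
    | _, _ => False)

/-- `G` contains an `M`-alternating cycle: a cycle whose edges alternate between
edges in `M` and edges not in `M` (cyclically). -/
def HasAlternatingCycle (G : SimpleGraph V) (M : Set (Sym2 V)) : Prop :=
  ∃ (v : V) (c : G.Walk v v), c.IsCycle ∧
    List.Chain' (fun e f => ¬(e ∈ M ↔ f ∈ M)) c.edges ∧
    ∀ e ∈ c.edges.head?, ∀ f ∈ c.edges.getLast?, ¬(e ∈ M ↔ f ∈ M)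

/-- Edges `e` and `f` lie together on a cycle of length 4 in `G`. -/
def OnCommonC4 (G : SimpleGraph V) (e f : Sym2 V) : Prop :=
  ∃ (v : V) (c : G.Walk v v), c.IsCycle ∧ c.length = 4 ∧ e ∈ c.edges ∧ f ∈ c.edges


variable {G : SimpleGraph V}

lemma mem_support_of_mem_edges' {a b u : V} {p : G.Walk a b} {e : Sym2 V}
    (he : e ∈ p.edges) (hu : u ∈ e) : u ∈ p.support := by
  induction e using Sym2.ind with
  | _ x y =>
    rcases Sym2.mem_iff.mp hu with rfl | rfl
    · exact p.fst_mem_support_of_mem_edges he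
    · exact p.snd_mem_support_of_mem_edges he

lemma head?_eq_of_mem_of_fst {a b : V} {p : G.Walk a b} (hp : p.IsPath)
    {e : Sym2 V} (he : e ∈ p.edges) (hae : a ∈ e) : p.edges.head? = some e := by
  cases p with
  | nil => simp at he
  | cons h q =>
    rw [Walk.edges_cons] at he ⊢
    rcases List.mem_cons.mp he with rfl | he'
    · rfl
    · exact absurd (mem_support_of_mem_edges' he' hae)
        ((Walk.cons_isPath_iff _ _).mp hp).2

lemma getLast?_eq_of_mem_of_snd {a b : V} {p : G.Walk a b} (hp : p.IsPath)
    {e : Sym2 V} (he : e ∈ p.edges) (hbe : b ∈ e) : p.edges.getLast? = some e := by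
  have h2 := head?_eq_of_mem_of_fst hp.reverse
    (by rw [Walk.edges_reverse]; exact List.mem_reverse.mpr he) hbe
  rwa [Walk.edges_reverse, List.head?_reverse] at h2

lemma fst_mem_head? {a b : V} {p : G.Walk a b} {e : Sym2 V}
    (he : p.edges.head? = some e) : a ∈ e := by
  cases p with
  | nil => simp at he
  | cons h q =>
    simp only [Walk.edges_cons, List.head?_cons, Option.some.injEq] at he
    exact he ▸ Sym2.mem_mk_left _ _

lemma snd_mem_getLast? {a b : V} {p : G.Walk a b} {e : Sym2 V}
    (he : p.edges.getLast? = some e) : b ∈ e := by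
  apply fst_mem_head? (p := p.reverse)
  rw [Walk.edges_reverse, List.head?_reverse]
  exact he

lemma interior_edges {a b : V} (p : G.Walk a b) :
    p.IsPath → ∀ u, u ∈ p.support → u ≠ a → u ≠ b →
    ∃ e f l₁ l₂, p.edges = l₁ ++ e :: f :: l₂ ∧ u ∈ e ∧ u ∈ f ∧
      ∀ g ∈ p.edges, u ∈ g → g = e ∨ g = f := by
  induction p with
  | nil =>
    intro _ u hu hua _
    simp only [Walk.support_nil, List.mem_singleton] at hu
    exact absurd hu hua
  | @cons x y z h q ih =>
    intro hp u hu hux huz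
    have hq : q.IsPath := hp.of_cons
    simp only [Walk.support_cons, List.mem_cons] at hu
    rcases hu with rfl | huq
    · exact absurd rfl hux
    by_cases huy : u = y
    · subst huy
      cases q with
      | nil => exact absurd rfl huz
      | cons h₂ r =>
        rename_i d
        refine ⟨s(x, u), s(u, d), [], r.edges, by simp, Sym2.mem_mk_right _ _,
          Sym2.mem_mk_left _ _, ?_⟩
        intro g hg hug
        simp only [Walk.edges_cons, List.mem_cons] at hg
        rcases hg with rfl | hg
        · exact Or.inl rfl
        rcases hg with rfl | hg
        · exact Or.inr rfl
        · exact absurd (mem_support_of_mem_edges' hg hug)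
            ((Walk.cons_isPath_iff _ _).mp hq).2
    · obtain ⟨e, f, l₁, l₂, heq, hue, huf, hall⟩ := ih hq u huq huy huz
      refine ⟨e, f, s(x, y) :: l₁, l₂, by simp [heq], hue, huf, ?_⟩
      intro g hg hug
      simp only [Walk.edges_cons, List.mem_cons] at hg
      rcases hg with rfl | hg
      · rcases Sym2.mem_iff.mp hug with rfl | rfl
        · exact absurd rfl hux
        · exact absurd rfl huy
      · exact hall g hg hug

lemma cycle_key {M : Set (Sym2 V)} {v : V} {c : G.Walk v v} (hc : c.IsCycle)
    (hch : List.Chain' (fun e f => ¬(e ∈ M ↔ f ∈ M)) c.edges)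
    (hwrap : ∀ e ∈ c.edges.head?, ∀ f ∈ c.edges.getLast?, ¬(e ∈ M ↔ f ∈ M)) :
    ∀ u ∈ c.support, ∃ e f, e ∈ c.edges ∧ f ∈ c.edges ∧ u ∈ e ∧ u ∈ f ∧
      ¬(e ∈ M ↔ f ∈ M) ∧ ∀ g ∈ c.edges, u ∈ g → g = e ∨ g = f := by
  intro u hu
  cases c with
  | nil => exact absurd rfl hc.ne_nil
  | cons h p =>
    rename_i b
    obtain ⟨hp, hsvb⟩ := (Walk.cons_isCycle_iff p h).mp hc
    have hbv : b ≠ v := h.ne'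
    have hne : p.edges ≠ [] := by
      cases p with
      | nil => exact absurd rfl hbv
      | cons _ _ => simp
    obtain ⟨e₁, es, hpe⟩ : ∃ e₁ es, p.edges = e₁ :: es := by
      cases hpE : p.edges with
      | nil => exact absurd hpE hne
      | cons e₁ es => exact ⟨e₁, es, rfl⟩
    have hL : p.edges.getLast? = some (p.edges.getLast hne) := List.getLast?_eq_getLast _
    have hcons : ∀ (x : Sym2 V) (l : List (Sym2 V)), l ≠ [] → (x :: l).getLast? = l.getLast? := by
      intro x l hl
      cases l with
      | nil => exact absurd rfl hl
      | cons y t => exact List.getLast?_cons_cons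
    have hcL : (Walk.cons h p).edges.getLast? = some (p.edges.getLast hne) := by
      rw [Walk.edges_cons, hcons _ _ hne, hL]
    have hch' := hch
    rw [Walk.edges_cons] at hch'
    simp only [Walk.support_cons, List.mem_cons] at hu
    by_cases huv : u = v
    · subst huv
      refine ⟨s(u, b), p.edges.getLast hne, List.mem_cons_self, ?_, Sym2.mem_mk_left _ _,
        snd_mem_getLast? hL, ?_, ?_⟩
      · exact List.mem_cons_of_mem _ (List.getLast_mem hne)
      · exact hwrap _ (by rw [Walk.edges_cons, List.head?_cons]; rfl) _ (by rw [hcL]; rfl)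
      · intro g hg hug
        rw [Walk.edges_cons, List.mem_cons] at hg
        rcases hg with rfl | hg
        · exact Or.inl rfl
        · right
          have h2 := getLast?_eq_of_mem_of_snd hp hg hug
          rw [hL, Option.some.injEq] at h2
          exact h2.symm
    · by_cases hub : u = b
      · subst hub
        have hhd : p.edges.head? = some (p.edges.head hne) := List.head?_eq_head hne
        refine ⟨s(v, u), p.edges.head hne, List.mem_cons_self,
          List.mem_cons_of_mem _ (List.head_mem hne), Sym2.mem_mk_right _ _,
          fst_mem_head? hhd, ?_, ?_⟩
        · exact (List.isChain_cons.mp hch').1 _ hhd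
        · intro g hg hug
          rw [Walk.edges_cons, List.mem_cons] at hg
          rcases hg with rfl | hg
          · exact Or.inl rfl
          · right
            have h2 := head?_eq_of_mem_of_fst hp hg hug
            rw [hhd, Option.some.injEq] at h2
            exact h2.symm
      · have hup : u ∈ p.support := by
          rcases hu with rfl | hu
          · exact absurd rfl huv
          · exact hu
        obtain ⟨e, f, l₁, l₂, heq, hue, huf, hall⟩ := interior_edges p hp u hup hub huv
        have hinf : [e, f] <:+: (Walk.cons h p).edges :=
          ⟨s(v, b) :: l₁, l₂, by simp [Walk.edges_cons, heq]⟩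
        refine ⟨e, f, ?_, ?_, hue, huf, List.isChain_pair.mp (hch.infix hinf), ?_⟩
        · rw [Walk.edges_cons, heq]; simp
        · rw [Walk.edges_cons, heq]; simp
        · intro g hg hug
          rw [Walk.edges_cons, List.mem_cons] at hg
          rcases hg with rfl | hg
          · rcases Sym2.mem_iff.mp hug with rfl | rfl
            · exact absurd rfl huv
            · exact absurd rfl hub
          · exact hall g hg hug

lemma matching_unique {M : Set (Sym2 V)} (hM : IsMatchingSet G M) {e f : Sym2 V} {u : V}
    (he : e ∈ M) (hf : f ∈ M) (hue : u ∈ e) (huf : u ∈ f) : e = f := by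
  by_contra hne
  exact hM.2 e he f hf hne u hue huf

lemma pair_edges {M N : Set (Sym2 V)} (hM : IsMatchingSet G M)
    (hN : IsPerfectMatchingOn G (cov M) N) {u : V} {g : Sym2 V}
    (hg : g ∈ (M \ N) ∪ (N \ M)) (hug : u ∈ g) :
    ∃ a b, a ∈ M ∧ a ∉ N ∧ b ∈ N ∧ b ∉ M ∧ u ∈ a ∧ u ∈ b ∧
      ∀ g' ∈ (M \ N) ∪ (N \ M), u ∈ g' → g' = a ∨ g' = b := by
  have hcovM : u ∈ cov M := by
    rcases hg with ⟨hgM, _⟩ | ⟨hgN, _⟩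
    · exact ⟨g, hgM, hug⟩
    · rw [← hN.2.2]; exact ⟨g, hgN, hug⟩
  have hcovN : u ∈ cov N := by rw [hN.2.2]; exact hcovM
  obtain ⟨a, haM, hua⟩ := hcovM
  obtain ⟨b, hbN, hub⟩ := hcovN
  have haN : a ∉ N := by
    intro haN
    have hab : a = b := matching_unique hN.1 haN hbN hua hub
    rcases hg with ⟨hgM, hgN⟩ | ⟨hgN, hgM⟩
    · exact hgN ((matching_unique hM hgM haM hug hua) ▸ haN)
    · exact hgM ((matching_unique hN.1 hgN hbN hug hub) ▸ (hab ▸ haM))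
  have hbM : b ∉ M := fun hbM => haN ((matching_unique hM hbM haM hub hua) ▸ hbN)
  refine ⟨a, b, haM, haN, hbN, hbM, hua, hub, ?_⟩
  rintro g' (⟨hg'M, _⟩ | ⟨hg'N, _⟩) hug'
  · exact Or.inl (matching_unique hM hg'M haM hug' hua)
  · exact Or.inr (matching_unique hN.1 hg'N hbN hug' hub)

lemma grow [Fintype V] {M N : Set (Sym2 V)} (hM : IsMatchingSet G M)
    (hN : IsPerfectMatchingOn G (cov M) N) :
    ∀ (n : ℕ) (u u₀ : V) (p : G.Walk u u₀),
      Fintype.card V + 1 ≤ p.support.length + n →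
      p.IsPath → p.edges ≠ [] →
      (∀ e ∈ p.edges, e ∈ (M \ N) ∪ (N \ M)) →
      List.Chain' (fun e f => ¬(e ∈ M ↔ f ∈ M)) p.edges →
      HasAlternatingCycle G M := by
  intro n
  induction n with
  | zero =>
    intro u u₀ p hcard hp _ _ _
    have := hp.support_nodup.length_le_card
    omega
  | succ n ih =>
    intro u u₀ p hcard hp hne hpD hch
    have hDedge : ∀ e ∈ (M \ N) ∪ (N \ M), e ∈ G.edgeSet := by
      rintro e (⟨heM, _⟩ | ⟨heN, _⟩)
      · exact hM.1 heM
      · exact hN.1.1 heN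
    have hghd : p.edges.head? = some (p.edges.head hne) := List.head?_eq_head hne
    generalize hgdef : p.edges.head hne = g at hghd
    have hgmem : g ∈ p.edges := hgdef ▸ List.head_mem hne
    have hgD : g ∈ (M \ N) ∪ (N \ M) := hpD g hgmem
    have hug : u ∈ g := fst_mem_head? hghd
    obtain ⟨a, b, haM, haN, hbN, hbM, hua, hub, huniq⟩ := pair_edges hM hN hgD hug
    obtain ⟨g', hg'D, hug', halt⟩ :
        ∃ g', g' ∈ (M \ N) ∪ (N \ M) ∧ u ∈ g' ∧ ¬(g ∈ M ↔ g' ∈ M) := by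
      rcases huniq g hgD hug with rfl | rfl
      · exact ⟨b, Or.inr ⟨hbN, hbM⟩, hub, fun hiff => hbM (hiff.mp haM)⟩
      · exact ⟨a, Or.inl ⟨haM, haN⟩, hua, fun hiff => hbM (hiff.mpr haM)⟩
    obtain ⟨u', hgu'⟩ := Sym2.mem_iff_exists.mp hug'
    have hadj : G.Adj u u' := by
      have h2 := hDedge g' hg'D
      rw [hgu'] at h2
      exact h2
    have hg'ne : g' ∉ p.edges := by
      intro hmem
      have h2 := head?_eq_of_mem_of_fst hp hmem hug'
      rw [hghd, Option.some.injEq] at h2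
      exact halt (by rw [h2])
    have hu'g' : u' ∈ g' := by rw [hgu']; exact Sym2.mem_mk_right _ _
    have hswap : s(u', u) = g' := by rw [hgu']; exact Sym2.eq_swap
    by_cases hu'supp : u' ∈ p.support
    · by_cases hu'0 : u' = u₀
      · -- close the cycle
        subst hu'0
        refine ⟨u', Walk.cons hadj.symm p, ?_, ?_, ?_⟩
        · exact (Walk.cons_isCycle_iff p hadj.symm).mpr ⟨hp, by rw [hswap]; exact hg'ne⟩
        · rw [Walk.edges_cons]
          refine List.isChain_cons.mpr ⟨?_, hch⟩
          intro y hy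
          rw [hghd, Option.mem_some_iff] at hy
          rw [hswap, ← hy]
          exact fun hiff => halt hiff.symm
        · intro e he f hf
          rw [Walk.edges_cons, List.head?_cons, Option.mem_some_iff] at he
          subst he
          have hcons : ∀ (x : Sym2 V) (l : List (Sym2 V)), l ≠ [] →
              (x :: l).getLast? = l.getLast? := by
            intro x l hl
            cases l with
            | nil => exact absurd rfl hl
            | cons y t => exact List.getLast?_cons_cons
          rw [Walk.edges_cons, hcons _ _ hne] at hf
          have hfmem : f ∈ p.edges := by
            rcases List.mem_getLast?_eq_getLast hf with ⟨hne2, hf2⟩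
            exact hf2 ▸ List.getLast_mem hne2
          have hu'f : u' ∈ f := snd_mem_getLast? hf
          have hfD := hpD f hfmem
          have hg'f : g' ≠ f := fun h2 => hg'ne (h2 ▸ hfmem)
          obtain ⟨a₂, b₂, ha₂M, _, _, hb₂M, _, _, huniq₂⟩ := pair_edges hM hN hg'D hu'g'
          rw [hswap]
          rcases huniq₂ g' hg'D hu'g' with h3 | h3 <;>
            rcases huniq₂ f hfD hu'f with h4 | h4
          · exact absurd (h3.trans h4.symm) hg'f
          · rw [h3, h4]; exact fun hiff => hb₂M (hiff.mp ha₂M)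
          · rw [h3, h4]; exact fun hiff => hb₂M (hiff.mpr ha₂M)
          · exact absurd (h3.trans h4.symm) hg'f
      · -- impossible: u' is interior
        exfalso
        obtain ⟨e, f, l₁, l₂, heq, hu'e, hu'f, hall⟩ :=
          interior_edges p hp u' hu'supp (Ne.symm hadj.ne) hu'0
        have hemem : e ∈ p.edges := by rw [heq]; simp
        have hfmem : f ∈ p.edges := by rw [heq]; simp
        have haltef : ¬(e ∈ M ↔ f ∈ M) :=
          List.isChain_pair.mp (hch.infix ⟨l₁, l₂, by simp [heq]⟩)
        have hefne : e ≠ f := fun h2 => haltef (by rw [h2])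
        obtain ⟨a₃, b₃, _, _, _, _, _, _, huniq₃⟩ := pair_edges hM hN (hpD e hemem) hu'e
        have hef3 : g' = e ∨ g' = f := by
          rcases huniq₃ e (hpD e hemem) hu'e with h1 | h1 <;>
            rcases huniq₃ f (hpD f hfmem) hu'f with h2 | h2 <;>
              rcases huniq₃ g' hg'D hu'g' with h3 | h3 <;>
                first
                  | (left; rw [h3, ← h1])
                  | (right; rw [h3, ← h2])
                  | (exact absurd (h1.trans h2.symm) hefne)
        have : g' ∈ p.edges := by
          rcases hef3 with rfl | rfl
          · exact hemem
          · exact hfmem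
        exact hg'ne this
    · -- extend the path
      refine ih u' u₀ (Walk.cons hadj.symm p) ?_ ?_ (by simp) ?_ ?_
      · rw [Walk.support_cons, List.length_cons]
        omega
      · exact (Walk.cons_isPath_iff _ _).mpr ⟨hp, hu'supp⟩
      · intro e he
        rw [Walk.edges_cons, List.mem_cons] at he
        rcases he with rfl | he
        · rw [hswap]; exact hg'D
        · exact hpD e he
      · rw [Walk.edges_cons]
        refine List.isChain_cons.mpr ⟨?_, hch⟩
        intro y hy
        rw [hghd, Option.mem_some_iff] at hy
        rw [hswap, ← hy]
        exact fun hiff => halt hiff.symm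

/-- A matching `M` of `G` is uniquely restricted iff `G` has no `M`-alternating cycle. -/
theorem uniquely_restricted_iff_no_alternating_cycle {V : Type*} [Fintype V]
    (G : SimpleGraph V) (M : Set (Sym2 V)) (hM : IsMatchingSet G M) :
    IsUniquelyRestrictedMatching G M ↔ ¬ HasAlternatingCycle G M := by
  constructor
  · rintro hUR ⟨v, c, hc, hch, hwrap⟩
    have key := cycle_key (M := M) hc hch hwrap
    have keyM : ∀ w ∈ c.support, ∃ eM fC, eM ∈ c.edges ∧ fC ∈ c.edges ∧ w ∈ eM ∧ w ∈ fC ∧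
        eM ∈ M ∧ fC ∉ M ∧ ∀ g ∈ c.edges, w ∈ g → g = eM ∨ g = fC := by
      intro w hw
      obtain ⟨e₀, f₀, he₀, hf₀, hwe₀, hwf₀, halt₀, huniq₀⟩ := key w hw
      by_cases h0 : e₀ ∈ M
      · exact ⟨e₀, f₀, he₀, hf₀, hwe₀, hwf₀, h0,
          fun h1 => halt₀ ⟨fun _ => h1, fun _ => h0⟩, huniq₀⟩
      · have h1 : f₀ ∈ M := by
          by_contra h1
          exact halt₀ ⟨fun h2 => absurd h2 h0, fun h2 => absurd h2 h1⟩
        exact ⟨f₀, e₀, hf₀, he₀, hwf₀, hwe₀, h1, h0,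
          fun g hg hwg => (huniq₀ g hg hwg).symm⟩
    set N : Set (Sym2 V) := (M \ {e | e ∈ c.edges}) ∪ ({e | e ∈ c.edges} \ M) with hNdef
    have hinS : ∀ e ∈ N, ∀ w, w ∈ e → w ∈ cov M := by
      rintro e (⟨heM, _⟩ | ⟨heC, heM⟩) w hwe
      · exact ⟨e, heM, hwe⟩
      · obtain ⟨eM, fC, heMc, _, hweM, _, heMM, _, _⟩ :=
          keyM w (mem_support_of_mem_edges' heC hwe)
        exact ⟨eM, heMM, hweM⟩
    have hmatch : IsMatchingSet G N := by
      constructor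
      · rintro e (⟨heM, _⟩ | ⟨heC, _⟩)
        · exact hM.1 heM
        · exact c.edges_subset_edgeSet heC
      · intro e he f hf hef w hwe hwf
        rcases he with ⟨heM, heC⟩ | ⟨heC, heM⟩ <;> rcases hf with ⟨hfM, hfC⟩ | ⟨hfC, hfM⟩
        · exact hef (matching_unique hM heM hfM hwe hwf)
        · obtain ⟨eM, fC, heMc, hfCc, hweM, hwfC, heMM, hfCM, huniq⟩ :=
            keyM w (mem_support_of_mem_edges' hfC hwf)
          exact heC (by rw [matching_unique hM heM heMM hwe hweM]; exact heMc)
        · obtain ⟨eM, fC, heMc, hfCc, hweM, hwfC, heMM, hfCM, huniq⟩ :=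
            keyM w (mem_support_of_mem_edges' heC hwe)
          exact hfC (by rw [matching_unique hM hfM heMM hwf hweM]; exact heMc)
        · obtain ⟨eM, fC, heMc, hfCc, hweM, hwfC, heMM, hfCM, huniq⟩ :=
            keyM w (mem_support_of_mem_edges' heC hwe)
          have h1 : e = fC := by
            rcases huniq e heC hwe with rfl | rfl
            · exact absurd heMM heM
            · rfl
          have h2 : f = fC := by
            rcases huniq f hfC hwf with rfl | rfl
            · exact absurd heMM hfM
            · rfl
          exact hef (h1.trans h2.symm)
    have hpm : IsPerfectMatchingOn G (cov M) N := by
      refine ⟨hmatch, hinS, ?_⟩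
      apply Set.Subset.antisymm
      · rintro w ⟨e, heN, hwe⟩
        exact hinS e heN w hwe
      · rintro w ⟨e, heM, hwe⟩
        by_cases heC : e ∈ c.edges
        · obtain ⟨eM, fC, heMc, hfCc, hweM, hwfC, heMM, hfCM, huniq⟩ :=
            keyM w (mem_support_of_mem_edges' heC hwe)
          exact ⟨fC, Or.inr ⟨hfCc, hfCM⟩, hwfC⟩
        · exact ⟨e, Or.inl ⟨heM, heC⟩, hwe⟩
    have hNM := hUR.2 N hpm
    obtain ⟨eM, fC, _, hfCc, _, _, _, hfCM, _⟩ := keyM v c.start_mem_support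
    have hfCN : fC ∈ N := Or.inr ⟨hfCc, hfCM⟩
    rw [hNM] at hfCN
    exact hfCM hfCN
  · intro hno
    refine ⟨hM, fun N hN => ?_⟩
    by_contra hne2
    obtain ⟨e, he⟩ := not_forall.mp (fun h => hne2 (Set.ext h))
    have heD : e ∈ (M \ N) ∪ (N \ M) := by
      by_cases h1 : e ∈ M <;> by_cases h2 : e ∈ N
      · exact absurd ⟨fun _ => h1, fun _ => h2⟩ he
      · exact Or.inl ⟨h1, h2⟩
      · exact Or.inr ⟨h2, h1⟩
      · exact absurd ⟨fun a => absurd a h2, fun a => absurd a h1⟩ he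
    have heE : e ∈ G.edgeSet := by
      rcases heD with ⟨h1, _⟩ | ⟨h1, _⟩
      · exact hM.1 h1
      · exact hN.1.1 h1
    induction e using Sym2.ind with
    | _ x y =>
      have hadj : G.Adj x y := (SimpleGraph.mem_edgeSet G).mp heE
      apply hno
      refine grow hM hN (Fintype.card V) y x (Walk.cons hadj.symm Walk.nil) ?_ ?_ (by simp) ?_ ?_
      · have h2 : (Walk.cons hadj.symm Walk.nil).support.length = 2 := rfl
        omega
      · exact (Walk.cons_isPath_iff _ _).mpr ⟨Walk.IsPath.nil, by simp [hadj.ne']⟩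
      · intro f hf
        rw [Walk.edges_cons] at hf
        simp only [Walk.edges_nil, List.mem_singleton] at hf
        rw [hf, Sym2.eq_swap]
        exact heD
      · exact List.isChain_singleton _

end SSE
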